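/- With L(j,t) as defined above, whenever j − t ≥ k we have L(j,t) = a_t. -/

import Mathlib

/-- `Λ_j = λ₁ + ⋯ + λ_j`. -/
def Lam (lam : ℕ → ℕ) (j : ℕ) : ℕ := ∑ i ∈ Finset.Icc 1 j, lam i

/-- telescoping sum over `Ico`. -/
lemma tele (f : ℕ → ℚ) : ∀ n m : ℕ, m ≤ n →
    ∑ s ∈ Finset.Ico m n, (f (s + 1) - f s) = f n - f m := by
  intro n
  induction n with
  | zero => intro m hm; interval_cases m; simp
  | succ n ih =>
    intro m hm
    rcases Nat.eq_or_lt_of_le hm with h | h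
    · simp [h]
    · have hmn : m ≤ n := by omega
      rw [Finset.sum_Ico_succ_top hmn, ih m hmn]
      ring

/-- whenever `j - t ≥ k`, `L(j,t) = a_t`. -/
theorem stmt9 (k : ℕ) (lam : ℕ → ℕ) (hk : 1 ≤ k)
    (h1 : 1 ≤ lam 1) (hkpos : 1 ≤ lam k) (hzero : ∀ i, k < i → lam i = 0)
    (hΛ : 2 ≤ Lam lam k)
    (a : ℤ → ℚ)
    (ha0 : ∀ i : ℤ, i ≤ 0 → a i = 1)
    (harec : ∀ n : ℤ, 1 ≤ n → a n = ∑ i ∈ Finset.Icc 1 k, (lam i : ℚ) * a (n - i))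
    (L : ℕ → ℕ → ℚ)
    (hLjj : ∀ j : ℕ, L j j = (a (j + 1) - a j) / ((Lam lam k : ℚ) - 1))
    (hLrec : ∀ j t : ℕ, t < j →
      L j t = L j (t + 1) -
        ((Lam lam (j - t) : ℚ) - 1) * (a (t + 1) - a t) / ((Lam lam k : ℚ) - 1)) :
    ∀ j t : ℕ, t ≤ j → k ≤ j - t → L j t = a t := by
  have hC : ((Lam lam k : ℚ) - 1) ≠ 0 := by
    have : (2 : ℚ) ≤ (Lam lam k : ℚ) := by exact_mod_cast hΛ
    linarith
  -- Lam stabilizes at k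
  have hLam_stab : ∀ m, k ≤ m → Lam lam m = Lam lam k := by
    intro m hm
    unfold Lam
    symm
    apply Finset.sum_subset (Finset.Icc_subset_Icc_right hm)
    intro x hx hxs
    simp only [Finset.mem_Icc] at hx hxs
    exact hzero x (by omega)
  -- general formula for L j t
  have hformula : ∀ d j t : ℕ, t + d = j →
      L j t = (a (j + 1) - a j) / ((Lam lam k : ℚ) - 1)
        - (∑ s ∈ Finset.Ico t j, ((Lam lam (j - s) : ℚ) - 1) * (a (s + 1) - a s))
          / ((Lam lam k : ℚ) - 1) := by
    intro d
    induction d with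
    | zero =>
      intro j t h
      have : t = j := by omega
      subst this
      simp [hLjj]
    | succ d ih =>
      intro j t h
      have ht : t < j := by omega
      rw [hLrec j t ht, ih j (t + 1) (by omega),
        Finset.sum_eq_sum_Ico_succ_bot ht
          (fun s => ((Lam lam (j - s) : ℚ) - 1) * (a (s + 1) - a s))]
      push_cast
      field_simp
      ring
  -- base case: L j (j-k) = a (j-k), stated as j = t + k
  have hbase : ∀ t : ℕ, L (t + k) t = a t := by
    intro t
    rw [hformula k (t + k) t rfl]
    have key : (∑ s ∈ Finset.Ico t (t + k),
        ((Lam lam (t + k - s) : ℚ) - 1) * (a (s + 1) - a s))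
        = a (t + k + 1) - a (t + k) - ((Lam lam k : ℚ) - 1) * a t := by
      have hsplit : (∑ s ∈ Finset.Ico t (t + k),
          ((Lam lam (t + k - s) : ℚ) - 1) * (a (s + 1) - a s))
          = (∑ s ∈ Finset.Ico t (t + k),
              (Lam lam (t + k - s) : ℚ) * (a (s + 1) - a s))
            - ∑ s ∈ Finset.Ico t (t + k), (a (s + 1) - a s) := by
        rw [← Finset.sum_sub_distrib]
        apply Finset.sum_congr rfl
        intro s _
        ring
      have htel1 : ∑ s ∈ Finset.Ico t (t + k), (a (s + 1) - a s)
          = a (t + k) - a t := by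
        have := tele (fun s : ℕ => a s) (t + k) t (by omega)
        simpa [Nat.cast_add, Nat.cast_one, add_assoc] using this
      -- main double-sum computation
      have hmain : (∑ s ∈ Finset.Ico t (t + k),
          (Lam lam (t + k - s) : ℚ) * (a (s + 1) - a s))
          = a (t + k + 1) - (Lam lam k : ℚ) * a t := by
        have hcast : ∀ s, (Lam lam (t + k - s) : ℚ)
            = ∑ i ∈ Finset.Icc 1 (t + k - s), (lam i : ℚ) := by
          intro s; simp [Lam]
        calc (∑ s ∈ Finset.Ico t (t + k),
              (Lam lam (t + k - s) : ℚ) * (a (s + 1) - a s))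
            = ∑ s ∈ Finset.Ico t (t + k), ∑ i ∈ Finset.Icc 1 (t + k - s),
                (lam i : ℚ) * (a (s + 1) - a s) := by
              apply Finset.sum_congr rfl
              intro s _
              rw [hcast, Finset.sum_mul]
          _ = ∑ i ∈ Finset.Icc 1 k, ∑ s ∈ Finset.Icc t (t + k - i),
                (lam i : ℚ) * (a (s + 1) - a s) := by
              apply Finset.sum_comm'
              intro s i
              simp only [Finset.mem_Ico, Finset.mem_Icc]
              omega
          _ = ∑ i ∈ Finset.Icc 1 k, (lam i : ℚ) * (a (t + k - i + 1) - a t) := by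
              apply Finset.sum_congr rfl
              intro i hi
              simp only [Finset.mem_Icc] at hi
              rw [← Finset.mul_sum]
              congr 1
              have h1 : Finset.Icc t (t + k - i) = Finset.Ico t (t + k - i + 1) := by
                rw [Finset.Ico_add_one_right_eq_Icc]
              rw [h1]
              have := tele (fun s : ℕ => a s) (t + k - i + 1) t (by omega)
              have hcast2 : ((t + k - i + 1 : ℕ) : ℤ) = (t : ℤ) + k - i + 1 := by
                push_cast [Nat.cast_sub (show i ≤ t + k by omega)]; ring
              simp only [hcast2] at this
              simpa using this
          _ = a (t + k + 1) - (Lam lam k : ℚ) * a t := by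
              have hrec := harec ((t : ℤ) + k + 1) (by omega)
              have hsum : ∑ i ∈ Finset.Icc 1 k, (lam i : ℚ) * a (t + k - i + 1)
                  = a (t + k + 1) := by
                rw [hrec]
                apply Finset.sum_congr rfl
                intro i hi
                simp only [Finset.mem_Icc] at hi
                congr 1
                push_cast [Nat.cast_sub (by omega : i ≤ t + k)]
                ring
              have hΛsum : ∑ i ∈ Finset.Icc 1 k, (lam i : ℚ) = (Lam lam k : ℚ) := by
                simp [Lam]
              calc ∑ i ∈ Finset.Icc 1 k, (lam i : ℚ) * (a (t + k - i + 1) - a t)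
                  = (∑ i ∈ Finset.Icc 1 k, (lam i : ℚ) * a (t + k - i + 1))
                    - (∑ i ∈ Finset.Icc 1 k, (lam i : ℚ)) * a t := by
                    rw [Finset.sum_mul, ← Finset.sum_sub_distrib]
                    apply Finset.sum_congr rfl
                    intro i _
                    ring
                _ = a (t + k + 1) - (Lam lam k : ℚ) * a t := by rw [hsum, hΛsum]
      rw [hsplit, hmain, htel1]
      ring
    rw [key]
    have hj : ((t + k : ℕ) : ℤ) = (t : ℤ) + k := by push_cast; ring
    rw [hj]
    field_simp
    ring
  -- main induction on d = j - t - k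
  have hmain : ∀ d t j : ℕ, t + k + d = j → L j t = a t := by
    intro d
    induction d with
    | zero =>
      intro t j h
      have : j = t + k := by omega
      subst this
      exact hbase t
    | succ d ih =>
      intro t j h
      have ht : t < j := by omega
      have hjt : j - t = k + d + 1 := by omega
      rw [hLrec j t ht, ih (t + 1) j (by omega), hjt,
        hLam_stab (k + d + 1) (by omega)]
      push_cast
      field_simp
      ring
  intro j t htj hkjt
  exact hmain (j - t - k) t j (by omega)
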